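/- arXiv:2104.11209 — 3 statements merged into one kernel-verified Lean document; each statement's English description precedes it below -/
import Mathlib

section
/- Every feasible point of problem 𝒫 is a regular point: for each of the possible patterns of active inequality constraints (none, one azimuth constraint, one elevation constraint, or one azimuth plus one elevation constraint), the gradients of the active constraints (including the sphere equality constraint) at any feasible point are linearly independent. -/
/-- Every feasible point of problem 𝒫 is regular (LICQ): for each possible pattern of
active constraints (none, one azimuth, one elevation, or one azimuth plus one elevation,
the constraint `p₁ ≥ 0` never being active), the gradients of the active constraints
(including the sphere constraint, whose gradient is `2p`) are linearly independent. -/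
theorem stmt_5 (γa γe b0 : ℝ) (hγa : 0 < γa) (hγe : 0 < γe) (hb : 0 < b0)
    (p : Fin 3 → ℝ)
    (hsphere : p 0 ^ 2 + p 1 ^ 2 + p 2 ^ 2 = b0 ^ 2)
    (ha1 : -(p 0 * γa) ≤ p 1) (ha2 : p 1 ≤ p 0 * γa)
    (he1 : -(p 0 * γe) ≤ p 2) (he2 : p 2 ≤ p 0 * γe)
    (hx : 0 ≤ p 0) :
    -- no inequality constraint active: the sphere gradient alone is independent
    (LinearIndependent ℝ ![(2 : ℝ) • p]) ∧
    -- exactly one azimuth constraint active (sign `s`)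
    (∀ s : ℝ, (s = 1 ∨ s = -1) → p 1 = s * (γa * p 0) →
      LinearIndependent ℝ ![(2 : ℝ) • p, ![-γa, s, 0]]) ∧
    -- exactly one elevation constraint active (sign `t`)
    (∀ t : ℝ, (t = 1 ∨ t = -1) → p 2 = t * (γe * p 0) →
      LinearIndependent ℝ ![(2 : ℝ) • p, ![-γe, 0, t]]) ∧
    -- one azimuth and one elevation constraint active
    (∀ s t : ℝ, (s = 1 ∨ s = -1) → (t = 1 ∨ t = -1) →
      p 1 = s * (γa * p 0) → p 2 = t * (γe * p 0) →
      LinearIndependent ℝ ![(2 : ℝ) • p, ![-γa, s, 0], ![-γe, 0, t]]) := by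
  have hp0 : 0 < p 0 := by
    rcases lt_or_eq_of_le hx with h | h
    · exact h
    · exfalso
      have h1 : p 1 = 0 := by nlinarith
      have h2 : p 2 = 0 := by nlinarith
      nlinarith
  refine ⟨?_, ?_, ?_, ?_⟩
  · rw [Fintype.linearIndependent_iff]
    intro g hg i
    fin_cases i
    have h0 := congrFun hg 0
    simp [Fin.sum_univ_one, Pi.smul_apply, smul_eq_mul] at h0
    exact h0.resolve_right hp0.ne'
  · intro s hs hact
    have hs2 : s * s = 1 := by rcases hs with h | h <;> simp [h]
    rw [Fintype.linearIndependent_iff]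
    intro g hg
    have h0 := congrFun hg 0
    have h1 := congrFun hg 1
    simp [Fin.sum_univ_two, Pi.smul_apply, smul_eq_mul] at h0 h1
    rw [hact] at h1
    have hg1e : g 1 = -(2 * g 0 * (γa * p 0)) := by
      linear_combination s * h1 - (2 * g 0 * (γa * p 0) + g 1) * hs2
    have key : g 0 * (p 0 * (2 + 2 * γa ^ 2)) = 0 := by
      linear_combination h0 + γa * hg1e
    have hpos : 0 < p 0 * (2 + 2 * γa ^ 2) := by positivity
    have hg0 : g 0 = 0 := (mul_eq_zero.mp key).resolve_right hpos.ne'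
    have hg1 : g 1 = 0 := by rw [hg1e, hg0]; ring
    intro i; fin_cases i <;> assumption
  · intro t ht hact
    have ht2 : t * t = 1 := by rcases ht with h | h <;> simp [h]
    rw [Fintype.linearIndependent_iff]
    intro g hg
    have h0 := congrFun hg 0
    have h2 := congrFun hg 2
    simp [Fin.sum_univ_two, Pi.smul_apply, smul_eq_mul] at h0 h2
    rw [hact] at h2
    have hg1e : g 1 = -(2 * g 0 * (γe * p 0)) := by
      linear_combination t * h2 - (2 * g 0 * (γe * p 0) + g 1) * ht2
    have key : g 0 * (p 0 * (2 + 2 * γe ^ 2)) = 0 := by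
      linear_combination h0 + γe * hg1e
    have hpos : 0 < p 0 * (2 + 2 * γe ^ 2) := by positivity
    have hg0 : g 0 = 0 := (mul_eq_zero.mp key).resolve_right hpos.ne'
    have hg1 : g 1 = 0 := by rw [hg1e, hg0]; ring
    intro i; fin_cases i <;> assumption
  · intro s t hs ht hacta hacte
    have hs2 : s * s = 1 := by rcases hs with h | h <;> simp [h]
    have ht2 : t * t = 1 := by rcases ht with h | h <;> simp [h]
    rw [Fintype.linearIndependent_iff]
    intro g hg
    have h0 := congrFun hg 0
    have h1 := congrFun hg 1
    have h2 := congrFun hg 2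
    simp [Fin.sum_univ_three, Pi.smul_apply, smul_eq_mul] at h0 h1 h2
    rw [hacta] at h1
    rw [hacte] at h2
    have hg1e : g 1 = -(2 * g 0 * (γa * p 0)) := by
      linear_combination s * h1 - (2 * g 0 * (γa * p 0) + g 1) * hs2
    have hg2e : g 2 = -(2 * g 0 * (γe * p 0)) := by
      linear_combination t * h2 - (2 * g 0 * (γe * p 0) + g 2) * ht2
    have key : g 0 * (p 0 * (2 + 2 * γa ^ 2 + 2 * γe ^ 2)) = 0 := by
      linear_combination h0 + γa * hg1e + γe * hg2e
    have hpos : 0 < p 0 * (2 + 2 * γa ^ 2 + 2 * γe ^ 2) := by positivity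
    have hg0 : g 0 = 0 := (mul_eq_zero.mp key).resolve_right hpos.ne'
    have hg1 : g 1 = 0 := by rw [hg1e, hg0]; ring
    have hg2 : g 2 = 0 := by rw [hg2e, hg0]; ring
    intro i; fin_cases i <;> assumption
end

section
/- Let 0 ≤ λ₁ ≤ λ₂ ≤ λ₃, z̄ ∈ ℝ³ with z̄₃ ≠ 0, and f̄(λ) = Σⱼ z̄ⱼ²/(λ + λⱼ)² − 1. Then the unique root λ̄₃ of f̄ in (−∞, −λ₃) satisfies −λ₃ − ‖z̄‖ ≤ λ̄₃ ≤ −λ₃ − |z̄₃|. -/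
/-- The unique root of the secular function in `(−∞, −λ₃)` lies in
`[−λ₃ − ‖z̄‖, −λ₃ − |z̄₃|]`. -/
theorem stmt_13 (l1 l2 l3 z1 z2 z3 : ℝ)
    (h0 : 0 ≤ l1) (h12 : l1 ≤ l2) (h23 : l2 ≤ l3) (hz3 : z3 ≠ 0)
    (f : ℝ → ℝ)
    (hf : f = fun x => z1 ^ 2 / (x + l1) ^ 2 + z2 ^ 2 / (x + l2) ^ 2 +
      z3 ^ 2 / (x + l3) ^ 2 - 1)
    (r : ℝ) (hr1 : r < -l3) (hr2 : f r = 0) :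
    -l3 - Real.sqrt (z1 ^ 2 + z2 ^ 2 + z3 ^ 2) ≤ r ∧ r ≤ -l3 - |z3| := by
  subst hf
  simp only at hr2
  have h3 : r + l3 < 0 := by linarith
  have h2 : r + l2 < 0 := by linarith
  have h1 : r + l1 < 0 := by linarith
  have hp3 : 0 < (r + l3) ^ 2 := pow_two_pos_of_ne_zero (ne_of_lt h3)
  have hp2 : 0 < (r + l2) ^ 2 := pow_two_pos_of_ne_zero (ne_of_lt h2)
  have hp1 : 0 < (r + l1) ^ 2 := pow_two_pos_of_ne_zero (ne_of_lt h1)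
  have heq : z1 ^ 2 / (r + l1) ^ 2 + z2 ^ 2 / (r + l2) ^ 2 +
      z3 ^ 2 / (r + l3) ^ 2 = 1 := by linarith
  -- squares comparison
  have hs1 : (r + l3) ^ 2 ≤ (r + l1) ^ 2 := by nlinarith
  have hs2 : (r + l3) ^ 2 ≤ (r + l2) ^ 2 := by nlinarith
  constructor
  · -- lower bound
    have hb1 : z1 ^ 2 / (r + l1) ^ 2 ≥ z1 ^ 2 / (r + l1) ^ 2 := le_refl _
    have hd1 : z1 ^ 2 * (r + l3) ^ 2 ≤ z1 ^ 2 * (r + l1) ^ 2 := by nlinarith [sq_nonneg z1]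
    have hd2 : z2 ^ 2 * (r + l3) ^ 2 ≤ z2 ^ 2 * (r + l2) ^ 2 := by nlinarith [sq_nonneg z2]
    have ha : z1 ^ 2 / (r + l1) ^ 2 ≤ z1 ^ 2 / (r + l3) ^ 2 := by
      rw [div_le_div_iff₀ hp1 hp3]; linarith
    have hb : z2 ^ 2 / (r + l2) ^ 2 ≤ z2 ^ 2 / (r + l3) ^ 2 := by
      rw [div_le_div_iff₀ hp2 hp3]; linarith
    have hsum : 1 ≤ (z1 ^ 2 + z2 ^ 2 + z3 ^ 2) / (r + l3) ^ 2 := by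
      have := heq
      have : (z1 ^ 2 + z2 ^ 2 + z3 ^ 2) / (r + l3) ^ 2 =
          z1 ^ 2 / (r + l3) ^ 2 + z2 ^ 2 / (r + l3) ^ 2 + z3 ^ 2 / (r + l3) ^ 2 := by ring
      rw [this]; linarith
    have hle : (r + l3) ^ 2 ≤ z1 ^ 2 + z2 ^ 2 + z3 ^ 2 := by
      have := (le_div_iff₀ hp3).mp hsum
      linarith
    have hsq : -(r + l3) ≤ Real.sqrt (z1 ^ 2 + z2 ^ 2 + z3 ^ 2) := by
      rw [show Real.sqrt (z1 ^ 2 + z2 ^ 2 + z3 ^ 2) =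
        Real.sqrt (z1 ^ 2 + z2 ^ 2 + z3 ^ 2) from rfl]
      have : (-(r + l3)) ^ 2 ≤ z1 ^ 2 + z2 ^ 2 + z3 ^ 2 := by nlinarith
      exact (Real.le_sqrt (by linarith) (by positivity)).mpr this
    linarith
  · -- upper bound
    have ht1 : 0 ≤ z1 ^ 2 / (r + l1) ^ 2 := by positivity
    have ht2 : 0 ≤ z2 ^ 2 / (r + l2) ^ 2 := by positivity
    have h31 : z3 ^ 2 / (r + l3) ^ 2 ≤ 1 := by linarith
    have hz : z3 ^ 2 ≤ (r + l3) ^ 2 := by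
      rw [div_le_one hp3] at h31; exact h31
    have : |z3| ≤ -(r + l3) := by
      nlinarith [abs_nonneg z3, sq_abs z3]
    linarith
end

section
/- Let 0 ≤ λ₁ ≤ λ₂ ≤ λ₃, z̄ ∈ ℝ³ with z̄₁ ≠ 0, and f̄(λ) = Σⱼ z̄ⱼ²/(λ + λⱼ)² − 1. Then the unique root of f̄ in (−λ₁, +∞) lies in the interval [−λ₁ + |z̄₁|, −λ₁ + ‖z̄‖]. -/
/-- The unique root of the secular function in `(−λ₁, +∞)` lies in
`[−λ₁ + |z̄₁|, −λ₁ + ‖z̄‖]`. -/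
theorem stmt_14 (l1 l2 l3 z1 z2 z3 : ℝ)
    (h0 : 0 ≤ l1) (h12 : l1 ≤ l2) (h23 : l2 ≤ l3) (hz1 : z1 ≠ 0)
    (f : ℝ → ℝ)
    (hf : f = fun x => z1 ^ 2 / (x + l1) ^ 2 + z2 ^ 2 / (x + l2) ^ 2 +
      z3 ^ 2 / (x + l3) ^ 2 - 1)
    (r : ℝ) (hr1 : -l1 < r) (hr2 : f r = 0) :
    -l1 + |z1| ≤ r ∧ r ≤ -l1 + Real.sqrt (z1 ^ 2 + z2 ^ 2 + z3 ^ 2) := by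
  subst hf
  simp only at hr2
  set a := r + l1 with ha
  set b := r + l2 with hb
  set c := r + l3 with hc
  have hapos : 0 < a := by simp [ha]; linarith
  have hbpos : 0 < b := by simp [hb]; linarith
  have hcpos : 0 < c := by simp [hc]; linarith
  have hab : a ≤ b := by simp [ha, hb]; linarith
  have hbc : b ≤ c := by simp [hb, hc]; linarith
  have heq : z1 ^ 2 / a ^ 2 + z2 ^ 2 / b ^ 2 + z3 ^ 2 / c ^ 2 = 1 := by linarith
  have h2 : (0:ℝ) ≤ z2 ^ 2 / b ^ 2 := by positivity
  have h3 : (0:ℝ) ≤ z3 ^ 2 / c ^ 2 := by positivity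
  constructor
  · have h1 : z1 ^ 2 / a ^ 2 ≤ 1 := by linarith
    have hle : z1 ^ 2 ≤ a ^ 2 := by
      rwa [div_le_one (by positivity)] at h1
    have := Real.sqrt_le_sqrt hle
    rw [Real.sqrt_sq_eq_abs, Real.sqrt_sq hapos.le] at this
    linarith
  · have hA : z2 ^ 2 / b ^ 2 ≤ z2 ^ 2 / a ^ 2 :=
      div_le_div_of_nonneg_left (by positivity) (by positivity) (by nlinarith)
    have hB : z3 ^ 2 / c ^ 2 ≤ z3 ^ 2 / a ^ 2 :=
      div_le_div_of_nonneg_left (by positivity) (by positivity) (by nlinarith)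
    have hsum : 1 ≤ (z1 ^ 2 + z2 ^ 2 + z3 ^ 2) / a ^ 2 := by
      rw [add_div, add_div]; linarith
    have hle : a ^ 2 ≤ z1 ^ 2 + z2 ^ 2 + z3 ^ 2 := by
      rwa [le_div_iff₀ (by positivity), one_mul] at hsum
    have := (Real.le_sqrt hapos.le (by positivity)).mpr hle
    linarith
end
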